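/- arXiv:2011.08938 — 2 statements merged into one kernel-verified Lean document; each statement's English description precedes it below -/
import Mathlib

section
/- For every integer n ≥ 0, the largest eigenvalue λ₁ of the adjacency matrix A(R̃_n) satisfies (n+1)(n+4)/(n+3) ≤ λ₁ ≤ n+2. -/
/-- The 5-cycle `C₅` on `Fin 5`. -/
def cycle5 : SimpleGraph (Fin 5) :=
  SimpleGraph.fromRel (fun i j => j = i + 1)

instance : DecidableRel cycle5.Adj := fun i j =>
  decidable_of_iff (i ≠ j ∧ (j = i + 1 ∨ i = j + 1)) Iff.rfl

/-- Duplicating the vertex `v'` of a simple graph `G`: a new vertex (the `Sum.inr` vertex) is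
added, adjacent to `v'` and to every neighbor of `v'` in `G`. -/
def dupGraph {V : Type*} (G : SimpleGraph V) (v' : V) : SimpleGraph (V ⊕ Unit) where
  Adj x y :=
    match x, y with
    | Sum.inl a, Sum.inl b => G.Adj a b
    | Sum.inl a, Sum.inr _ => a = v' ∨ G.Adj a v'
    | Sum.inr _, Sum.inl b => b = v' ∨ G.Adj b v'
    | Sum.inr _, Sum.inr _ => False
  symm := by
    refine ⟨?_⟩
    rintro (a | a) (b | b) h
    · exact G.adj_symm h
    · exact h
    · exact h
    · exact h.elim
  loopless := by
    refine ⟨?_⟩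
    rintro (a | a) h
    · exact G.irrefl h
    · exact h.elim

instance dupGraphAdjDecidable {V : Type*} [DecidableEq V] (G : SimpleGraph V)
    [DecidableRel G.Adj] (v' : V) : DecidableRel (dupGraph G v').Adj := fun x y =>
  match x, y with
  | Sum.inl a, Sum.inl b => inferInstanceAs (Decidable (G.Adj a b))
  | Sum.inl a, Sum.inr _ => inferInstanceAs (Decidable (a = v' ∨ G.Adj a v'))
  | Sum.inr _, Sum.inl b => inferInstanceAs (Decidable (b = v' ∨ G.Adj b v'))
  | Sum.inr _, Sum.inr _ => inferInstanceAs (Decidable False)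

/-- The vertex type of the reseminant graph built from `C₅` by the duplications recorded in
the list `l` (each entry records which of the five original cycle vertices is duplicated). -/
def resemType : List (Fin 5) → Type
  | [] => Fin 5
  | _ :: l => resemType l ⊕ Unit

instance resemTypeFintype : ∀ l : List (Fin 5), Fintype (resemType l)
  | [] => inferInstanceAs (Fintype (Fin 5))
  | _ :: l => letI := resemTypeFintype l; inferInstanceAs (Fintype (resemType l ⊕ Unit))

instance resemTypeDecEq : ∀ l : List (Fin 5), DecidableEq (resemType l)
  | [] => inferInstanceAs (DecidableEq (Fin 5))
  | _ :: l => letI := resemTypeDecEq l; inferInstanceAs (DecidableEq (resemType l ⊕ Unit))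

/-- The copy, inside `resemType l`, of an original vertex of the 5-cycle. -/
def origVert : (l : List (Fin 5)) → Fin 5 → resemType l
  | [], i => i
  | _ :: l, i => Sum.inl (origVert l i)

/-- The reseminant graph obtained from the 5-cycle `C₅` by the finite sequence of vertex
duplications recorded in `l`: for `l = v :: l'`, the vertex (the copy of the original cycle
vertex) `v` is duplicated in the graph built from `l'`. -/
def resemGraph : (l : List (Fin 5)) → SimpleGraph (resemType l)
  | [] => cycle5
  | v :: l => dupGraph (resemGraph l) (origVert l v)

instance resemGraphAdjDecidable : ∀ l : List (Fin 5), DecidableRel (resemGraph l).Adj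
  | [] => inferInstanceAs (DecidableRel cycle5.Adj)
  | v :: l =>
    letI := resemGraphAdjDecidable l
    inferInstanceAs (DecidableRel (dupGraph (resemGraph l) (origVert l v)).Adj)

/-- A simple graph is *reseminant* if it is (isomorphic to) a graph obtained from the 5-cycle
`C₅` by a finite sequence of vertex duplications, each duplicating one of the five original
cycle vertices. -/
def IsReseminant {V : Type*} (Γ : SimpleGraph V) : Prop :=
  ∃ l : List (Fin 5), Nonempty (Γ ≃g resemGraph l)

/-- `R̃_n`: the reseminant graph on `n + 5` vertices obtained from `C₅` by `n` successive
duplications, all duplicating the same fixed vertex `0` of the original 5-cycle. -/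
def tildeR (n : ℕ) : SimpleGraph (resemType (List.replicate n 0)) :=
  resemGraph (List.replicate n 0)

instance (n : ℕ) : DecidableRel (tildeR n).Adj :=
  resemGraphAdjDecidable (List.replicate n 0)

section helpers
open Matrix Polynomial

variable {V : Type*} [Fintype V] [DecidableEq V]

lemma myEvalCharpoly (A : Matrix V V ℝ) (μ : ℝ) :
    A.charpoly.eval μ = (Matrix.diagonal (fun _ => μ) - A).det := by
  rw [Matrix.charpoly, ← Polynomial.coe_evalRingHom, RingHom.map_det]
  congr 1
  ext i j
  by_cases h : i = j
  · subst h; simp [charmatrix_apply_eq]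
  · simp [charmatrix_apply_ne _ _ _ h, Matrix.diagonal_apply_ne _ h]

lemma myIsRootIff (A : Matrix V V ℝ) (μ : ℝ) :
    A.charpoly.IsRoot μ ↔ μ ∈ spectrum ℝ A := by
  rw [Polynomial.IsRoot, myEvalCharpoly, spectrum.mem_iff, Matrix.isUnit_iff_isUnit_det,
    Matrix.algebraMap_eq_diagonal, isUnit_iff_ne_zero]
  simp [Pi.algebraMap_def, Algebra.algebraMap_self_apply]

lemma mySpectrumEq (A : Matrix V V ℝ) (hA : A.IsHermitian) :
    spectrum ℝ A = Set.range hA.eigenvalues := by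
  conv_lhs => rw [hA.spectral_theorem]
  rw [Unitary.conjStarAlgAut_apply, Unitary.spectrum_star_right_conjugate]
  rw [spectrum_diagonal]
  congr 1

lemma myRayleigh (A : Matrix V V ℝ) (hA : A.IsHermitian) (lam : ℝ)
    (hlam : ∀ i, hA.eigenvalues i ≤ lam) (x : V → ℝ) :
    x ⬝ᵥ (A *ᵥ x) ≤ lam * (x ⬝ᵥ x) := by
  set U : Matrix V V ℝ := (hA.eigenvectorUnitary : Matrix V V ℝ) with hU
  have hUmem := hA.eigenvectorUnitary.2
  have hU1 : U * star U = 1 := (Matrix.mem_unitaryGroup_iff).mp hUmem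
  have hU2 : star U * U = 1 := (Matrix.mem_unitaryGroup_iff').mp hUmem
  set y : V → ℝ := star U *ᵥ x with hy
  have hstar : star U = Uᵀ := by
    rw [Matrix.star_eq_conjTranspose, Matrix.conjTranspose]
    ext i j; simp
  have key : ∀ M : Matrix V V ℝ, x ⬝ᵥ (U *ᵥ (M *ᵥ y)) = y ⬝ᵥ (M *ᵥ y) := by
    intro M
    rw [dotProduct_mulVec x U, ← Matrix.mulVec_transpose, ← hstar, ← hy]
  have h1 : x ⬝ᵥ (A *ᵥ x) = y ⬝ᵥ (Matrix.diagonal (RCLike.ofReal ∘ hA.eigenvalues) *ᵥ y) := by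
    conv_lhs => rw [hA.spectral_theorem, Unitary.conjStarAlgAut_apply, ← Matrix.mulVec_mulVec, ← Matrix.mulVec_mulVec]
    exact key _
  have h2 : x ⬝ᵥ x = y ⬝ᵥ y := by
    have h := key 1
    rw [Matrix.one_mulVec, hy, Matrix.mulVec_mulVec, hU1, Matrix.one_mulVec] at h
    exact h
  rw [h1, h2]
  have hdiag : y ⬝ᵥ (Matrix.diagonal (RCLike.ofReal ∘ hA.eigenvalues) *ᵥ y)
      = ∑ i, hA.eigenvalues i * (y i * y i) := by
    simp [dotProduct, Matrix.mulVec_diagonal]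
    congr 1; ext i; ring
  rw [hdiag, dotProduct, Finset.mul_sum]
  apply Finset.sum_le_sum
  intro i _
  have : (0:ℝ) ≤ y i * y i := mul_self_nonneg _
  exact mul_le_mul_of_nonneg_right (hlam i) this

lemma myRootLE (A : Matrix V V ℝ) (μ : ℝ) (h : A.charpoly.IsRoot μ) (C : ℝ)
    (hdiag : ∀ i, A i i = 0) (hnn : ∀ i j, 0 ≤ A i j) (hC : ∀ i, ∑ j, A i j ≤ C) :
    μ ≤ C := by
  have hdet : (Matrix.diagonal (fun _ => μ) - A).det = 0 := by
    rw [← myEvalCharpoly]; exact h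
  obtain ⟨v, hv0, hv⟩ := (Matrix.exists_mulVec_eq_zero_iff).mpr hdet
  have hAv : A *ᵥ v = μ • v := by
    have h1 : Matrix.diagonal (fun _ => μ) *ᵥ v - A *ᵥ v = 0 := by
      rw [← Matrix.sub_mulVec]; exact hv
    have h2 : Matrix.diagonal (fun _ => μ) *ᵥ v = μ • v := by
      ext i; simp [Matrix.mulVec_diagonal]
    have h3 := sub_eq_zero.mp h1
    rw [h2] at h3; exact h3.symm
  have heig : Module.End.HasEigenvalue (Matrix.toLin' A) μ :=
    Module.End.hasEigenvalue_of_hasEigenvector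
      ⟨(Module.End.mem_eigenspace_iff).mpr (by rw [Matrix.toLin'_apply, hAv]), hv0⟩
  obtain ⟨k, hk⟩ := eigenvalue_mem_ball heig
  rw [Metric.mem_closedBall, Real.dist_eq, hdiag k, sub_zero] at hk
  have h4 : ∑ j ∈ Finset.univ.erase k, ‖A k j‖ = ∑ j ∈ Finset.univ.erase k, A k j := by
    apply Finset.sum_congr rfl
    intro j _; exact Real.norm_of_nonneg (hnn k j)
  have h5 : ∑ j ∈ Finset.univ.erase k, A k j ≤ ∑ j, A k j :=
    Finset.sum_le_sum_of_subset_of_nonneg (Finset.erase_subset _ _)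
      (fun j _ _ => hnn k j)
  calc μ ≤ |μ| := le_abs_self μ
    _ ≤ ∑ j ∈ Finset.univ.erase k, ‖A k j‖ := hk
    _ = ∑ j ∈ Finset.univ.erase k, A k j := h4
    _ ≤ ∑ j, A k j := h5
    _ ≤ C := hC k

-- generic dup step lemmas
section dup
variable {W : Type*} [Fintype W] [DecidableEq W] (G : SimpleGraph W) [DecidableRel G.Adj]
  (v' : W) (x : W → ℝ)


lemma dup_dot : (Sum.elim x (fun _ => 1) : W ⊕ Unit → ℝ) ⬝ᵥ Sum.elim x (fun _ => 1)
    = x ⬝ᵥ x + 1 := by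
  simp [dotProduct, Fintype.sum_sum_type]

lemma dup_adj_inl_inl (a b : W) : (dupGraph G v').Adj (Sum.inl a) (Sum.inl b) ↔ G.Adj a b :=
  Iff.rfl

lemma dup_ite_split (b : W) (c : ℝ) :
    (if b = v' ∨ G.Adj b v' then c else 0)
      = (if b = v' then c else 0) + (if G.Adj b v' then c else 0) := by
  by_cases h1 : b = v'
  · subst h1; simp [SimpleGraph.irrefl]
  · by_cases h2 : G.Adj b v' <;> simp [h1, h2]

lemma dup_mulVec_inl (a : W) :
    (((dupGraph G v').adjMatrix ℝ) *ᵥ Sum.elim x (fun _ => 1)) (Sum.inl a)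
      = ((G.adjMatrix ℝ) *ᵥ x) a + (if a = v' ∨ G.Adj a v' then 1 else 0) := by
  simp only [Matrix.mulVec, dotProduct, Fintype.sum_sum_type]
  have e1 : ∀ b, ((dupGraph G v').adjMatrix ℝ) (Sum.inl a) (Sum.inl b) = (G.adjMatrix ℝ) a b :=
    fun b => rfl
  have e2 : ∀ u, ((dupGraph G v').adjMatrix ℝ) (Sum.inl a) (Sum.inr u)
      = if a = v' ∨ G.Adj a v' then (1:ℝ) else 0 := fun u => rfl
  simp only [e1, e2, Sum.elim_inl, Sum.elim_inr, mul_one, Finset.univ_unique, Finset.sum_singleton]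

lemma dup_sum_ite (f : W → ℝ) :
    ∑ b, (if b = v' ∨ G.Adj b v' then f b else 0) = f v' + ∑ b, (if G.Adj b v' then f b else 0) := by
  have : ∀ b, (if b = v' ∨ G.Adj b v' then f b else 0)
      = (if b = v' then f b else 0) + (if G.Adj b v' then f b else 0) := by
    intro b
    by_cases h1 : b = v'
    · subst h1; simp [SimpleGraph.irrefl]
    · by_cases h2 : G.Adj b v' <;> simp [h1, h2]
  rw [Finset.sum_congr rfl (fun b _ => this b), Finset.sum_add_distrib,
    Finset.sum_ite_eq' Finset.univ v' f]
  simp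

lemma dup_mulVec_inr (u : Unit) :
    (((dupGraph G v').adjMatrix ℝ) *ᵥ Sum.elim x (fun _ => 1)) (Sum.inr u)
      = x v' + ((G.adjMatrix ℝ) *ᵥ x) v' := by
  simp only [Matrix.mulVec, dotProduct, Fintype.sum_sum_type]
  have : ∀ b : W, ((dupGraph G v').adjMatrix ℝ) (Sum.inr u) (Sum.inl b)
      = (if b = v' ∨ G.Adj b v' then 1 else 0) := by
    intro b; rfl
  simp only [this]
  have h2 : ∑ b, (if b = v' ∨ G.Adj b v' then (1:ℝ) else 0) * (Sum.elim x (fun _ => (1:ℝ)) : W ⊕ Unit → ℝ) (Sum.inl b)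
      = ∑ b, (if b = v' ∨ G.Adj b v' then x b else 0) := by
    apply Finset.sum_congr rfl; intro b _
    by_cases h : b = v' ∨ G.Adj b v' <;> simp [h]
  rw [h2, dup_sum_ite]
  have h3 : ((G.adjMatrix ℝ) *ᵥ x) v' = ∑ b, (if G.Adj b v' then x b else 0) := by
    simp [Matrix.mulVec, dotProduct, SimpleGraph.adjMatrix_apply]
    apply Finset.sum_congr rfl; intro b _
    by_cases h : G.Adj v' b
    · simp [h, G.adj_symm h, h.symm]
    · have : ¬ G.Adj b v' := fun hh => h hh.symm
      simp [h, this]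
  simp only [show ∀ w : Unit, ((dupGraph G v').adjMatrix ℝ) (Sum.inr u) (Sum.inr w) = 0 from
    fun w => rfl]
  simp [SimpleGraph.adjMatrix_apply, dupGraph, h3]
  exact Finset.sum_congr rfl fun b _ => if_congr (G.adj_comm b v') rfl rfl

lemma dup_quad :
    (Sum.elim x (fun _ => 1) : W ⊕ Unit → ℝ) ⬝ᵥ (((dupGraph G v').adjMatrix ℝ) *ᵥ Sum.elim x (fun _ => 1))
      = x ⬝ᵥ ((G.adjMatrix ℝ) *ᵥ x) + 2 * (x v' + ((G.adjMatrix ℝ) *ᵥ x) v') := by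
  rw [dotProduct]
  rw [Fintype.sum_sum_type]
  simp only [Sum.elim_inl, Sum.elim_inr, dup_mulVec_inl, dup_mulVec_inr]
  have h1 : ∑ a, x a * (((G.adjMatrix ℝ) *ᵥ x) a + (if a = v' ∨ G.Adj a v' then 1 else 0))
      = x ⬝ᵥ ((G.adjMatrix ℝ) *ᵥ x) + ∑ a, (if a = v' ∨ G.Adj a v' then x a else 0) := by
    rw [dotProduct, ← Finset.sum_add_distrib]
    apply Finset.sum_congr rfl; intro a _
    by_cases h : a = v' ∨ G.Adj a v' <;> simp [h] <;> ring
  rw [h1, dup_sum_ite]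
  have h3 : ((G.adjMatrix ℝ) *ᵥ x) v' = ∑ b, (if G.Adj b v' then x b else 0) := by
    simp [Matrix.mulVec, dotProduct, SimpleGraph.adjMatrix_apply]
    apply Finset.sum_congr rfl; intro b _
    by_cases h : G.Adj v' b
    · simp [h, G.adj_symm h, h.symm]
    · have : ¬ G.Adj b v' := fun hh => h hh.symm
      simp [h, this]
  rw [← h3]
  simp only [Finset.univ_unique, Finset.sum_const, Finset.card_singleton, one_smul]
  ring

lemma dup_rowsum_inl (a : W) :
    ∑ j, ((dupGraph G v').adjMatrix ℝ) (Sum.inl a) j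
      = ∑ j, (G.adjMatrix ℝ) a j + (if a = v' ∨ G.Adj a v' then 1 else 0) := by
  rw [Fintype.sum_sum_type]
  have e1 : ∀ b, ((dupGraph G v').adjMatrix ℝ) (Sum.inl a) (Sum.inl b) = (G.adjMatrix ℝ) a b :=
    fun b => rfl
  have e2 : ∀ u, ((dupGraph G v').adjMatrix ℝ) (Sum.inl a) (Sum.inr u)
      = if a = v' ∨ G.Adj a v' then (1:ℝ) else 0 := fun u => rfl
  simp only [e1, e2, Finset.univ_unique, Finset.sum_singleton]

lemma dup_rowsum_inr (u : Unit) :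
    ∑ j, ((dupGraph G v').adjMatrix ℝ) (Sum.inr u) j = 1 + ∑ j, (G.adjMatrix ℝ) v' j := by
  rw [Fintype.sum_sum_type]
  have h1 : ∀ b : W, ((dupGraph G v').adjMatrix ℝ) (Sum.inr u) (Sum.inl b)
      = (if b = v' ∨ G.Adj b v' then (1:ℝ) else 0) := by
    intro b; rfl
  have h2 : ∀ w : Unit, ((dupGraph G v').adjMatrix ℝ) (Sum.inr u) (Sum.inr w) = 0 := by
    intro w; simp only [SimpleGraph.adjMatrix_apply]; simp [dupGraph]
  simp only [h1, h2]
  rw [dup_sum_ite G v' (fun _ => (1:ℝ))]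
  have h3 : ∑ j, (G.adjMatrix ℝ) v' j = ∑ b, (if G.Adj b v' then (1:ℝ) else 0) := by
    apply Finset.sum_congr rfl; intro b _
    rw [SimpleGraph.adjMatrix_apply]
    exact if_congr (G.adj_comm v' b) rfl rfl
  rw [h3]; simp

end dup

-- test vector
noncomputable def xvec : (n : ℕ) → resemType (List.replicate n 0) → ℝ
  | 0 => fun i : Fin 5 => if i = 2 ∨ i = 3 then 0 else 1
  | n+1 => (Sum.elim (xvec n) (fun _ => 1) : resemType (List.replicate n 0) ⊕ Unit → ℝ)

-- base case facts
lemma base_dot : (xvec 0) ⬝ᵥ (xvec 0) = 3 := by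
  show ∑ i : Fin 5, _ = (3:ℝ)
  rw [Fin.sum_univ_five]
  simp (config := { decide := true }) [xvec]
  norm_num

lemma base_x0 : xvec 0 (origVert (List.replicate 0 0) 0) = 1 := by
  simp (config := { decide := true }) [xvec, origVert]

lemma cycle5_adj (i j : Fin 5) : cycle5.Adj i j ↔ i ≠ j ∧ (j = i + 1 ∨ i = j + 1) := Iff.rfl

lemma base_mulVec0 : ((tildeR 0).adjMatrix ℝ *ᵥ xvec 0) (origVert (List.replicate 0 0) 0) = 2 := by
  show ∑ j : Fin 5, (cycle5.adjMatrix ℝ) 0 j * xvec 0 j = 2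
  rw [Fin.sum_univ_five]
  simp (config := { decide := true }) [xvec, SimpleGraph.adjMatrix_apply, cycle5_adj]
  norm_num

lemma base_quad : (xvec 0) ⬝ᵥ ((tildeR 0).adjMatrix ℝ *ᵥ xvec 0) = 4 := by
  show ∑ i : Fin 5, xvec 0 i * (∑ j : Fin 5, (cycle5.adjMatrix ℝ) i j * xvec 0 j) = 4
  rw [Fin.sum_univ_five]
  simp only [Fin.sum_univ_five]
  simp (config := { decide := true }) [xvec, SimpleGraph.adjMatrix_apply, cycle5_adj]
  norm_num

lemma base_rowsum : ∀ i, ∑ j, ((tildeR 0).adjMatrix ℝ) i j ≤ 2 := by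
  intro i
  show ∑ j : Fin 5, (cycle5.adjMatrix ℝ) i j ≤ 2
  fin_cases i <;>
  · rw [Fin.sum_univ_five]
    simp (config := { decide := true }) [SimpleGraph.adjMatrix_apply, cycle5_adj]
    norm_num

lemma tildeR_facts : ∀ n : ℕ,
    xvec n ⬝ᵥ xvec n = (n:ℝ) + 3 ∧
    xvec n ⬝ᵥ ((tildeR n).adjMatrix ℝ *ᵥ xvec n) = ((n:ℝ)+1) * ((n:ℝ)+4) ∧
    xvec n (origVert (List.replicate n 0) 0) = 1 ∧
    ((tildeR n).adjMatrix ℝ *ᵥ xvec n) (origVert (List.replicate n 0) 0) = (n:ℝ)+2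
  | 0 => ⟨by rw [base_dot]; norm_num, by rw [base_quad]; norm_num, base_x0,
      by rw [base_mulVec0]; norm_num⟩
  | (n+1) => by
    obtain ⟨h1, h2, h3, h4⟩ := tildeR_facts n
    refine ⟨?_, ?_, ?_, ?_⟩
    · show (Sum.elim (xvec n) (fun _ => 1) : resemType (List.replicate n 0) ⊕ Unit → ℝ) ⬝ᵥ
        (Sum.elim (xvec n) (fun _ => 1)) = _
      rw [dup_dot, h1]
      push_cast; ring
    · show (Sum.elim (xvec n) (fun _ => 1) : resemType (List.replicate n 0) ⊕ Unit → ℝ) ⬝ᵥ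
        ((dupGraph (tildeR n) (origVert (List.replicate n 0) 0)).adjMatrix ℝ *ᵥ
          (Sum.elim (xvec n) (fun _ => 1))) = _
      rw [dup_quad, h2, h3, h4]
      push_cast; ring
    · exact h3
    · show ((dupGraph (tildeR n) (origVert (List.replicate n 0) 0)).adjMatrix ℝ *ᵥ
        (Sum.elim (xvec n) (fun _ => 1))) (Sum.inl (origVert (List.replicate n 0) 0)) = _
      rw [dup_mulVec_inl, h4, if_pos (Or.inl rfl)]
      push_cast; ring

lemma tildeR_rowsum : ∀ n : ℕ, ∀ i, ∑ j, ((tildeR n).adjMatrix ℝ) i j ≤ (n:ℝ)+2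
  | 0 => by
    intro i
    simpa using base_rowsum i
  | (n+1) => by
    intro i
    show ∑ j, ((dupGraph (tildeR n) (origVert (List.replicate n 0) 0)).adjMatrix ℝ) i j ≤ _
    have hn := tildeR_rowsum n
    cases i with
    | inl a =>
      rw [dup_rowsum_inl]
      have hb : (if a = origVert (List.replicate n 0) 0 ∨
          (tildeR n).Adj a (origVert (List.replicate n 0) 0) then (1:ℝ) else 0) ≤ 1 := by
        split <;> norm_num
      have := hn a
      push_cast
      push_cast at this
      linarith
    | inr u =>
      rw [dup_rowsum_inr]
      have := hn (origVert (List.replicate n 0) 0)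
      push_cast
      push_cast at this
      linarith

end helpers

section finalpf
open Matrix Polynomial

/-- For every integer `n ≥ 0`, the largest eigenvalue `λ₁` of the adjacency
matrix `A(R̃_n)` (the largest root of its characteristic polynomial; all eigenvalues are real
since the matrix is symmetric) satisfies `(n+1)(n+4)/(n+3) ≤ λ₁ ≤ n+2`. -/
theorem largest_eigenvalue_tildeR_bounds (n : ℕ) :
    ∃ lam : ℝ, ((tildeR n).adjMatrix ℝ).charpoly.IsRoot lam ∧
      (∀ mu : ℝ, ((tildeR n).adjMatrix ℝ).charpoly.IsRoot mu → mu ≤ lam) ∧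
      ((n : ℝ) + 1) * ((n : ℝ) + 4) / ((n : ℝ) + 3) ≤ lam ∧ lam ≤ (n : ℝ) + 2 := by
  haveI : Nonempty (resemType (List.replicate n 0)) := ⟨origVert _ 0⟩
  set A : Matrix (resemType (List.replicate n 0)) (resemType (List.replicate n 0)) ℝ :=
    (tildeR n).adjMatrix ℝ with hAdef
  have hA : A.IsHermitian := by
    ext i j
    simp only [Matrix.conjTranspose_apply, star_trivial, hAdef, SimpleGraph.adjMatrix_apply]
    exact if_congr ((tildeR n).adj_comm j i) rfl rfl
  set lam : ℝ := Finset.univ.sup' Finset.univ_nonempty hA.eigenvalues with hlamdef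
  have hle : ∀ i, hA.eigenvalues i ≤ lam := fun i =>
    Finset.le_sup' hA.eigenvalues (Finset.mem_univ i)
  have hmem : lam ∈ Set.range hA.eigenvalues := by
    obtain ⟨i, _, hi⟩ := Finset.exists_mem_eq_sup' Finset.univ_nonempty hA.eigenvalues
    exact ⟨i, hi.symm⟩
  have hroot : A.charpoly.IsRoot lam := by
    rw [myIsRootIff, mySpectrumEq A hA]
    exact hmem
  have hmax : ∀ mu : ℝ, A.charpoly.IsRoot mu → mu ≤ lam := by
    intro mu hmu
    rw [myIsRootIff, mySpectrumEq A hA] at hmu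
    obtain ⟨i, hi⟩ := hmu
    rw [← hi]
    exact hle i
  obtain ⟨f1, f2, f3, f4⟩ := tildeR_facts n
  have hray := myRayleigh A hA lam hle (xvec n)
  rw [f1, f2] at hray
  have hpos : (0:ℝ) < (n:ℝ) + 3 := by positivity
  have hlower : ((n:ℝ) + 1) * ((n:ℝ) + 4) / ((n:ℝ) + 3) ≤ lam := by
    rw [div_le_iff₀ hpos]
    linarith
  have hupper : lam ≤ (n:ℝ) + 2 := by
    apply myRootLE A lam hroot ((n:ℝ)+2)
    · intro i
      simp [hAdef]
    · intro i j
      simp only [hAdef, SimpleGraph.adjMatrix_apply]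
      split <;> norm_num
    · exact tildeR_rowsum n
  exact ⟨lam, hroot, hmax, hlower, hupper⟩

end finalpf
end

section
/- For every integer n ≥ 0, both −φ and φ⁻¹ are eigenvalues of the adjacency matrix A(R̃_n), where φ = (1+√5)/2 is the golden ratio. -/
/-- The golden ratio `φ = (1 + √5)/2`. -/
noncomputable def goldenRatio' : ℝ := (1 + Real.sqrt 5) / 2

section Aux

open Matrix Polynomial

/-- An explicit eigenvector witness makes `μ` a root of the characteristic polynomial. -/
lemma charpoly_isRoot_of_eigen {n : Type*} [Fintype n] [DecidableEq n] (M : Matrix n n ℝ)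
    (μ : ℝ) (v : n → ℝ) (hv : v ≠ 0) (h : M.mulVec v = μ • v) : M.charpoly.IsRoot μ := by
  have key : M.charpoly.eval μ = (Matrix.diagonal (fun _ : n => μ) - M).det := by
    rw [Matrix.charpoly, ← Polynomial.coe_evalRingHom, RingHom.map_det]
    congr 1
    ext i j
    by_cases hij : i = j <;>
      simp [Matrix.charmatrix_apply, Matrix.diagonal_apply, hij]
  rw [Polynomial.IsRoot, key, ← Matrix.exists_mulVec_eq_zero_iff]
  refine ⟨v, hv, ?_⟩
  rw [Matrix.sub_mulVec, h]
  ext i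
  simp [Matrix.mulVec_diagonal]

/-- The eigenvector: zero on the duplicated vertices and on the original vertex `0`. -/
def evec (μ : ℝ) : (l : List (Fin 5)) → resemType l → ℝ
  | [], i => ![0, 1, μ, -μ, -1] i
  | _ :: l, Sum.inl v => evec μ l v
  | _ :: _, Sum.inr _ => 0

lemma evec_cons (μ : ℝ) (a : Fin 5) (l : List (Fin 5)) :
    evec μ (a :: l) = Sum.elim (evec μ l) 0 := by
  funext x; cases x <;> rfl

lemma evec_orig0 (μ : ℝ) : ∀ l : List (Fin 5), evec μ l (origVert l 0) = 0
  | [] => rfl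
  | _ :: l => evec_orig0 μ l

lemma evec_orig1 (μ : ℝ) : ∀ l : List (Fin 5), evec μ l (origVert l 1) = 1
  | [] => rfl
  | _ :: l => evec_orig1 μ l

lemma evec_ne_zero (μ : ℝ) (l : List (Fin 5)) : evec μ l ≠ 0 := by
  intro h
  have := congrFun h (origVert l 1)
  rw [evec_orig1] at this
  exact one_ne_zero this

lemma dup_eigen {V : Type*} [Fintype V] [DecidableEq V] (G : SimpleGraph V)
    [DecidableRel G.Adj] (v' : V) (μ : ℝ) (f : V → ℝ) (hf0 : f v' = 0)
    (hf : (G.adjMatrix ℝ).mulVec f = μ • f) :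
    ((dupGraph G v').adjMatrix ℝ).mulVec (Sum.elim f 0) = μ • Sum.elim f 0 := by
  funext x
  cases x with
  | inl a =>
    have : ((dupGraph G v').adjMatrix ℝ).mulVec (Sum.elim f 0) (Sum.inl a)
        = (G.adjMatrix ℝ).mulVec f a := by
      simp only [Matrix.mulVec, dotProduct, Fintype.sum_sum_type,
        SimpleGraph.adjMatrix_apply]
      simp only [Sum.elim_inl, Sum.elim_inr, Pi.zero_apply, mul_zero, Finset.sum_const_zero,
        add_zero]
      rfl
    rw [this, hf]
    simp
  | inr u =>
    have : ((dupGraph G v').adjMatrix ℝ).mulVec (Sum.elim f 0) (Sum.inr u)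
        = (G.adjMatrix ℝ).mulVec f v' := by
      simp only [Matrix.mulVec, dotProduct, Fintype.sum_sum_type,
        SimpleGraph.adjMatrix_apply]
      simp only [Sum.elim_inl, Sum.elim_inr, Pi.zero_apply, mul_zero, Finset.sum_const_zero,
        add_zero]
      refine Finset.sum_congr rfl fun b _ => ?_
      show (if (b = v' ∨ G.Adj b v') then (1:ℝ) else 0) * f b
          = (if G.Adj v' b then (1:ℝ) else 0) * f b
      by_cases hb : b = v'
      · subst hb; simp [hf0, G.loopless]
      · have : (b = v' ∨ G.Adj b v') ↔ G.Adj v' b := by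
          constructor
          · rintro (h | h)
            · exact absurd h hb
            · exact h.symm
          · exact fun h => Or.inr h.symm
        rw [if_congr this rfl rfl]
    rw [this, hf]
    simp [hf0]

lemma resem_eigen (μ : ℝ) (hμ : μ ^ 2 + μ = 1) : ∀ n : ℕ,
    ((resemGraph (List.replicate n 0)).adjMatrix ℝ).mulVec (evec μ (List.replicate n 0))
      = μ • evec μ (List.replicate n 0)
  | 0 => by
    show (cycle5.adjMatrix ℝ).mulVec ![0, 1, μ, -μ, -1] = μ • ![0, 1, μ, -μ, -1]
    have hA : cycle5.adjMatrix ℝ =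
        !![0,1,0,0,1; 1,0,1,0,0; 0,1,0,1,0; 0,0,1,0,1; 1,0,0,1,0] := by
      ext i j; fin_cases i <;> fin_cases j <;> rfl
    rw [hA]
    funext i
    fin_cases i <;> simp [Matrix.mulVec, dotProduct, Fin.sum_univ_five] <;>
      nlinarith [hμ]
  | n + 1 => by
    have ih := resem_eigen μ hμ n
    rw [show List.replicate (n + 1) (0 : Fin 5) = 0 :: List.replicate n 0 from rfl]
    show ((dupGraph (resemGraph (List.replicate n 0))
        (origVert (List.replicate n 0) 0)).adjMatrix ℝ).mulVec _ = _
    rw [evec_cons]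
    exact dup_eigen _ _ μ _ (evec_orig0 μ _) ih

end Aux

/-- For every integer `n ≥ 0`, both `−φ` and `φ⁻¹` are eigenvalues of the
adjacency matrix `A(R̃_n)`, where `φ = (1+√5)/2` is the golden ratio. -/
theorem goldenRatio_eigenvalues_tildeR (n : ℕ) :
    ((tildeR n).adjMatrix ℝ).charpoly.IsRoot (-goldenRatio') ∧
    ((tildeR n).adjMatrix ℝ).charpoly.IsRoot goldenRatio'⁻¹ := by
  have hs : Real.sqrt 5 ^ 2 = 5 := Real.sq_sqrt (by norm_num)
  have hs0 : (0:ℝ) ≤ Real.sqrt 5 := Real.sqrt_nonneg 5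
  have hinv : goldenRatio'⁻¹ = (Real.sqrt 5 - 1) / 2 := by
    apply inv_eq_of_mul_eq_one_right
    unfold goldenRatio'
    nlinarith
  constructor
  · refine charpoly_isRoot_of_eigen _ _ (evec (-goldenRatio') (List.replicate n 0))
      (evec_ne_zero _ _) (resem_eigen _ ?_ n)
    unfold goldenRatio'; nlinarith
  · refine charpoly_isRoot_of_eigen _ _ (evec goldenRatio'⁻¹ (List.replicate n 0))
      (evec_ne_zero _ _) (resem_eigen _ ?_ n)
    rw [hinv]; nlinarith
end
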